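/- For |q| < 1 and nonzero complex a, c, y, w, u, d with |a/(cd)| < 1 and all denominators nonzero: the series _5φ_4 with upper parameters yq, wq, uq, ywuq, d, lower parameters wuq, yuq, ywq, aq/c, base q and argument a/(cd), equals (1 - a/c)/(1 - a/(cd)) times the very-well-poised _7φ_6 with parameters ywu; q√(ywu), -q√(ywu), y, w, u, d over √(ywu), -√(ywu), yuq, wuq, ywq, a/c, base q, argument aq/(cd). Explicitly: Σ_{k=0}^∞ (yq,wq,uq,ywuq,d;q)_k / ((q, wuq, yuq, ywq, aq/c;q)_k) (a/cd)^k = [(1-a/c)/(1-a/cd)] Σ_{k=0}^∞ [(1-ywu q^{2k})/(1-ywu)] (ywu, y, w, u, d;q)_k / ((q, yuq, wuq, ywq, a/c;q)_k) (aq/cd)^k. -/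

import Mathlib

set_option maxHeartbeats 1000000

open Finset Filter Topology

/-- The q-shifted factorial `(a;q)_k`. -/
noncomputable def qPoch (a q : ℂ) (k : ℕ) : ℂ := ∏ j ∈ Finset.range k, (1 - a * q ^ j)

lemma qPoch_succ (a q : ℂ) (k : ℕ) : qPoch a q (k + 1) = qPoch a q k * (1 - a * q ^ k) :=
  Finset.prod_range_succ _ _

lemma qPoch_shift (a q : ℂ) (k : ℕ) : qPoch a q (k + 1) = (1 - a) * qPoch (a * q) q k := by
  induction k with
  | zero => simp [qPoch]
  | succ n ih => rw [qPoch_succ, ih, qPoch_succ]; ring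

noncomputable def Sfun (a c y w u d q : ℂ) (k : ℕ) : ℂ :=
  (qPoch (y * q) q k * qPoch (w * q) q k * qPoch (u * q) q k *
      qPoch (y * w * u * q) q k * qPoch d q k) /
    (qPoch q q k * qPoch (w * u * q) q k * qPoch (y * u * q) q k *
      qPoch (y * w * q) q k * qPoch (a * q / c) q k) * (a / (c * d)) ^ k

noncomputable def Rfun (a c y w u d q : ℂ) (k : ℕ) : ℂ :=
  (1 - y * w * u * q ^ (2 * k)) / (1 - y * w * u) *
    ((qPoch (y * w * u) q k * qPoch y q k * qPoch w q k * qPoch u q k * qPoch d q k) /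
      (qPoch q q k * qPoch (y * u * q) q k * qPoch (w * u * q) q k *
        qPoch (y * w * q) q k * qPoch (a / c) q k)) * (a * q / (c * d)) ^ k

noncomputable def Ffun (A Z y w u d q x : ℂ) : ℂ :=
  Z * ((1 - y * q * x) * (1 - w * q * x) * (1 - u * q * x) * (1 - y * w * u * q * x) *
      (1 - d * x)) /
    ((1 - q * x) * (1 - w * u * q * x) * (1 - y * u * q * x) * (1 - y * w * q * x) *
      (1 - A * q * x))

noncomputable def Gfun (A Z y w u q x : ℂ) : ℂ :=
  Z * q * x * (1 - y * w * u * q * q * x * x) * ((1 - y) * (1 - w) * (1 - u)) /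
    ((1 - q * x) * (1 - y * u * q * x) * (1 - w * u * q * x) * (1 - y * w * q * x) * (1 - A))

lemma keyG (A Z y w u d q x : ℂ) (hA : A = Z * d) (hac : 1 - A ≠ 0)
    (hE1 : (1 - q * x) ≠ 0) (hE2 : (1 - w * u * q * x) ≠ 0) (hE3 : (1 - y * u * q * x) ≠ 0)
    (hE4 : (1 - y * w * q * x) ≠ 0) (hE5 : (1 - A * q * x) ≠ 0) :
    (1 - d * x) * Gfun A Z y w u q x =
      (1 - A * (q * x)) / (1 - A) * Ffun A Z y w u d q x + (A * x - Z) / (1 - A) := by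
  subst hA
  simp only [Gfun, Ffun]
  rw [mul_div_assoc', div_mul_div_comm,
    div_add_div _ _ (mul_ne_zero hac (mul_ne_zero (mul_ne_zero (mul_ne_zero
      (mul_ne_zero hE1 hE2) hE3) hE4) hE5)) hac,
    div_eq_div_iff (mul_ne_zero (mul_ne_zero (mul_ne_zero (mul_ne_zero hE1 hE3) hE2) hE4) hac)
      (mul_ne_zero (mul_ne_zero hac (mul_ne_zero (mul_ne_zero (mul_ne_zero
        (mul_ne_zero hE1 hE2) hE3) hE4) hE5)) hac)]
  ring

lemma key1 (a c y w u d q : ℂ) (k : ℕ)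
    (hden : ∀ k : ℕ, qPoch q q k * qPoch (w * u * q) q k * qPoch (y * u * q) q k *
      qPoch (y * w * q) q k * qPoch (a * q / c) q k ≠ 0) :
    Sfun a c y w u d q (k + 1) =
      Ffun (a / c) (a / (c * d)) y w u d q (q ^ k) * Sfun a c y w u d q k := by
  have h := hden k
  have hQ5 : qPoch (a * q / c) q k ≠ 0 := right_ne_zero_of_mul h
  have h4 := left_ne_zero_of_mul h
  have hQ4 : qPoch (y * w * q) q k ≠ 0 := right_ne_zero_of_mul h4
  have h3 := left_ne_zero_of_mul h4
  have hQ3 : qPoch (y * u * q) q k ≠ 0 := right_ne_zero_of_mul h3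
  have h2 := left_ne_zero_of_mul h3
  have hQ2 : qPoch (w * u * q) q k ≠ 0 := right_ne_zero_of_mul h2
  have hQ1 : qPoch q q k ≠ 0 := left_ne_zero_of_mul h2
  have h' := hden (k + 1)
  simp only [qPoch_succ] at h'
  have hE5 : (1 - a * q / c * q ^ k) ≠ 0 := right_ne_zero_of_mul (right_ne_zero_of_mul h')
  have h4' := left_ne_zero_of_mul h'
  have hE4 : (1 - y * w * q * q ^ k) ≠ 0 := right_ne_zero_of_mul (right_ne_zero_of_mul h4')
  have h3' := left_ne_zero_of_mul h4'
  have hE3 : (1 - y * u * q * q ^ k) ≠ 0 := right_ne_zero_of_mul (right_ne_zero_of_mul h3')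
  have h2' := left_ne_zero_of_mul h3'
  have hE2 : (1 - w * u * q * q ^ k) ≠ 0 := right_ne_zero_of_mul (right_ne_zero_of_mul h2')
  have hE1 : (1 - q * q ^ k) ≠ 0 := right_ne_zero_of_mul (left_ne_zero_of_mul h2')
  have hE5' : (1 - a / c * q * q ^ k) ≠ 0 := by
    have e : a / c * q = a * q / c := by ring
    rw [e]; exact hE5
  have frac2 : ∀ n d p : ℂ, n / d * p = n * p / d := fun _ _ _ => div_mul_eq_mul_div _ _ _
  have frac4 : ∀ n1 d1 n2 d2 p : ℂ,
      n1 / d1 * (n2 / d2 * p) = n1 * n2 * p / (d1 * d2) := by intros; ring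
  simp only [Sfun, Ffun]
  rw [qPoch_succ (y * q), qPoch_succ (w * q), qPoch_succ (u * q), qPoch_succ (y * w * u * q),
    qPoch_succ d, qPoch_succ q, qPoch_succ (w * u * q), qPoch_succ (y * u * q),
    qPoch_succ (y * w * q), qPoch_succ (a * q / c), pow_succ]
  rw [frac2, frac4]
  refine (div_eq_div_iff ?_ ?_).mpr ?_
  · repeat' apply mul_ne_zero
    all_goals assumption
  · repeat' apply mul_ne_zero
    all_goals assumption
  · ring

lemma key2a (a c y w u d q : ℂ) (k : ℕ)
    (hywu : 1 - y * w * u ≠ 0) (hac : 1 - a / c ≠ 0)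
    (hden : ∀ k : ℕ, qPoch q q k * qPoch (w * u * q) q k * qPoch (y * u * q) q k *
      qPoch (y * w * q) q k * qPoch (a * q / c) q k ≠ 0) :
    Rfun a c y w u d q (k + 1) =
      (1 - d * q ^ k) * Gfun (a / c) (a / (c * d)) y w u q (q ^ k) * Sfun a c y w u d q k := by
  have h := hden k
  have hQ5 : qPoch (a * q / c) q k ≠ 0 := right_ne_zero_of_mul h
  have h4 := left_ne_zero_of_mul h
  have hQ4 : qPoch (y * w * q) q k ≠ 0 := right_ne_zero_of_mul h4
  have h3 := left_ne_zero_of_mul h4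
  have hQ3 : qPoch (y * u * q) q k ≠ 0 := right_ne_zero_of_mul h3
  have h2 := left_ne_zero_of_mul h3
  have hQ2 : qPoch (w * u * q) q k ≠ 0 := right_ne_zero_of_mul h2
  have hQ1 : qPoch q q k ≠ 0 := left_ne_zero_of_mul h2
  have h' := hden (k + 1)
  simp only [qPoch_succ] at h'
  have hE4 : (1 - y * w * q * q ^ k) ≠ 0 :=
    right_ne_zero_of_mul (right_ne_zero_of_mul (left_ne_zero_of_mul h'))
  have h3' := left_ne_zero_of_mul (left_ne_zero_of_mul h')
  have hE3 : (1 - y * u * q * q ^ k) ≠ 0 := right_ne_zero_of_mul (right_ne_zero_of_mul h3')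
  have h2' := left_ne_zero_of_mul h3'
  have hE2 : (1 - w * u * q * q ^ k) ≠ 0 := right_ne_zero_of_mul (right_ne_zero_of_mul h2')
  have hE1 : (1 - q * q ^ k) ≠ 0 := right_ne_zero_of_mul (left_ne_zero_of_mul h2')
  have harg : ∀ j : ℕ, (a * q / (c * d)) ^ j = (a / (c * d)) ^ j * q ^ j := by
    intro j; rw [← mul_pow]; congr 1; ring
  have hacq : a / c * q = a * q / c := by ring
  have frac3 : ∀ p1 p2 p3 p4 p5 : ℂ, p1 / p2 * (p3 / p4) * p5 = p1 * p3 * p5 / (p2 * p4) := by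
    intros; ring
  have frac4 : ∀ e1 n1 d1 n2 d2 p : ℂ,
      e1 * (n1 / d1) * (n2 / d2 * p) = e1 * n1 * n2 * p / (d1 * d2) := by
    intros; ring
  simp only [Rfun, Sfun, Gfun, harg]
  rw [qPoch_shift (y * w * u), qPoch_shift y, qPoch_shift w, qPoch_shift u, qPoch_shift (a / c),
    hacq]
  rw [qPoch_succ d, qPoch_succ q, qPoch_succ (y * u * q), qPoch_succ (w * u * q),
    qPoch_succ (y * w * q)]
  have h2k : q ^ (2 * (k + 1)) = q ^ k * q ^ k * (q * q) := by ring
  rw [h2k, pow_succ, pow_succ]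
  rw [frac3, frac4]
  refine (div_eq_div_iff ?_ ?_).mpr ?_
  · repeat' apply mul_ne_zero
    all_goals assumption
  · repeat' apply mul_ne_zero
    all_goals assumption
  · ring

lemma key2 (a c y w u d q : ℂ) (k : ℕ) (hc : c ≠ 0) (hd : d ≠ 0)
    (hywu : 1 - y * w * u ≠ 0) (hac : 1 - a / c ≠ 0)
    (hden : ∀ k : ℕ, qPoch q q k * qPoch (w * u * q) q k * qPoch (y * u * q) q k *
      qPoch (y * w * q) q k * qPoch (a * q / c) q k ≠ 0) :
    Rfun a c y w u d q (k + 1) =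
      1 / (1 - a / c) * Sfun a c y w u d q (k + 1)
        - a / c / (1 - a / c) * (q ^ (k + 1) * Sfun a c y w u d q (k + 1))
        + (a / c / (1 - a / c) * (q ^ k * Sfun a c y w u d q k)
          - a / (c * d) / (1 - a / c) * Sfun a c y w u d q k) := by
  have h' := hden (k + 1)
  simp only [qPoch_succ] at h'
  have hE5 : (1 - a * q / c * q ^ k) ≠ 0 := right_ne_zero_of_mul (right_ne_zero_of_mul h')
  have h4' := left_ne_zero_of_mul h'
  have hE4 : (1 - y * w * q * q ^ k) ≠ 0 := right_ne_zero_of_mul (right_ne_zero_of_mul h4')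
  have h3' := left_ne_zero_of_mul h4'
  have hE3 : (1 - y * u * q * q ^ k) ≠ 0 := right_ne_zero_of_mul (right_ne_zero_of_mul h3')
  have h2' := left_ne_zero_of_mul h3'
  have hE2 : (1 - w * u * q * q ^ k) ≠ 0 := right_ne_zero_of_mul (right_ne_zero_of_mul h2')
  have hE1 : (1 - q * q ^ k) ≠ 0 := right_ne_zero_of_mul (left_ne_zero_of_mul h2')
  have hE5' : (1 - a / c * q * q ^ k) ≠ 0 := by
    have e : a / c * q = a * q / c := by ring
    rw [e]; exact hE5
  have hA : a / c = a / (c * d) * d := by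
    field_simp
  rw [key2a a c y w u d q k hywu hac hden,
    keyG (a / c) (a / (c * d)) y w u d q (q ^ k) hA hac hE1 hE2 hE3 hE4
      (by rw [mul_assoc] at hE5' ⊢; exact hE5'),
    add_mul, mul_assoc, ← key1 a c y w u d q k hden]
  rw [pow_succ]
  ring
/-- Transformation between a `₅φ₄` and a very-well-poised `₇φ₆` series. -/
theorem phi54_eq_vwp_phi76 (a c y w u d q : ℂ)
    (hq : ‖q‖ < 1) (hz : ‖a / (c * d)‖ < 1)
    (hq0 : q ≠ 0) (ha : a ≠ 0) (hc : c ≠ 0) (hy : y ≠ 0) (hw : w ≠ 0) (hu : u ≠ 0) (hd : d ≠ 0)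
    (hywu : 1 - y * w * u ≠ 0) (hacd : 1 - a / (c * d) ≠ 0)
    (hden : ∀ k : ℕ, qPoch q q k * qPoch (w * u * q) q k * qPoch (y * u * q) q k *
      qPoch (y * w * q) q k * qPoch (a * q / c) q k ≠ 0)
    (hden' : ∀ k : ℕ, qPoch (a / c) q k ≠ 0) :
    ∑' k : ℕ,
        (qPoch (y * q) q k * qPoch (w * q) q k * qPoch (u * q) q k *
            qPoch (y * w * u * q) q k * qPoch d q k) /
          (qPoch q q k * qPoch (w * u * q) q k * qPoch (y * u * q) q k *
            qPoch (y * w * q) q k * qPoch (a * q / c) q k) * (a / (c * d)) ^ k =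
      (1 - a / c) / (1 - a / (c * d)) *
        ∑' k : ℕ,
          (1 - y * w * u * q ^ (2 * k)) / (1 - y * w * u) *
            ((qPoch (y * w * u) q k * qPoch y q k * qPoch w q k * qPoch u q k * qPoch d q k) /
              (qPoch q q k * qPoch (y * u * q) q k * qPoch (w * u * q) q k *
                qPoch (y * w * q) q k * qPoch (a / c) q k)) * (a * q / (c * d)) ^ k := by
  have hac : 1 - a / c ≠ 0 := by
    have h1 := hden' 1
    simpa [qPoch] using h1
  have hcd : c * d ≠ 0 := mul_ne_zero hc hd
  have hca : c - a ≠ 0 := by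
    intro h
    apply hac
    have : a = c := (sub_eq_zero.mp h).symm
    rw [this, div_self hc, sub_self]
  have hcda : c * d - a ≠ 0 := by
    intro h
    apply hacd
    have : a = c * d := (sub_eq_zero.mp h).symm
    rw [this, div_self hcd, sub_self]
  have eS : (fun k : ℕ =>
      (qPoch (y * q) q k * qPoch (w * q) q k * qPoch (u * q) q k *
          qPoch (y * w * u * q) q k * qPoch d q k) /
        (qPoch q q k * qPoch (w * u * q) q k * qPoch (y * u * q) q k *
          qPoch (y * w * q) q k * qPoch (a * q / c) q k) * (a / (c * d)) ^ k)
      = Sfun a c y w u d q := rfl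
  have eR : (fun k : ℕ =>
      (1 - y * w * u * q ^ (2 * k)) / (1 - y * w * u) *
        ((qPoch (y * w * u) q k * qPoch y q k * qPoch w q k * qPoch u q k * qPoch d q k) /
          (qPoch q q k * qPoch (y * u * q) q k * qPoch (w * u * q) q k *
            qPoch (y * w * q) q k * qPoch (a / c) q k)) * (a * q / (c * d)) ^ k)
      = Rfun a c y w u d q := rfl
  rw [eS, eR]
  -- continuity and limit of Ffun along q^k
  have hF0 : Ffun (a / c) (a / (c * d)) y w u d q 0 = a / (c * d) := by
    simp [Ffun]
  have hcont : ContinuousAt (fun x => Ffun (a / c) (a / (c * d)) y w u d q x) 0 := by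
    simp only [Ffun]
    apply ContinuousAt.div
    · fun_prop
    · fun_prop
    · norm_num
  have hpow : Tendsto (fun k : ℕ => (q : ℂ) ^ k) atTop (𝓝 0) := by
    apply tendsto_pow_atTop_nhds_zero_of_norm_lt_one
    simpa using hq
  have hlim : Tendsto (fun k : ℕ => Ffun (a / c) (a / (c * d)) y w u d q (q ^ k)) atTop
      (𝓝 (a / (c * d))) := by
    have h := hcont.tendsto.comp hpow
    rwa [hF0] at h
  set r : ℝ := (1 + ‖a / (c * d)‖) / 2 with hrdef
  have hr1 : r < 1 := by
    rw [hrdef]; linarith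
  have hzr : ‖a / (c * d)‖ < r := by
    rw [hrdef]; linarith
  have hev : ∀ᶠ k : ℕ in atTop, ‖Ffun (a / c) (a / (c * d)) y w u d q (q ^ k)‖ ≤ r := by
    have := hlim.norm
    filter_upwards [this.eventually (gt_mem_nhds hzr)]
      with k hk using le_of_lt hk
  have hSsum : Summable (Sfun a c y w u d q) := by
    apply summable_of_ratio_norm_eventually_le hr1
    filter_upwards [hev] with k hk
    rw [key1 a c y w u d q k hden, norm_mul]
    exact mul_le_mul_of_nonneg_right hk (norm_nonneg _)
  have hQsum : Summable (fun k => (q : ℂ) ^ k * Sfun a c y w u d q k) := by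
    apply Summable.of_norm_bounded (summable_norm_iff.mpr hSsum)
    intro k
    rw [norm_mul, norm_pow]
    calc ‖q‖ ^ k * ‖Sfun a c y w u d q k‖ ≤ 1 * ‖Sfun a c y w u d q k‖ := by
          apply mul_le_mul_of_nonneg_right _ (norm_nonneg _)
          exact pow_le_one₀ (norm_nonneg q) (le_of_lt (by simpa using hq))
      _ = ‖Sfun a c y w u d q k‖ := one_mul _
  have hS1 : Summable (fun k => Sfun a c y w u d q (k + 1)) := (summable_nat_add_iff 1).mpr hSsum
  have hQ1 : Summable (fun k => (q : ℂ) ^ (k + 1) * Sfun a c y w u d q (k + 1)) := by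
    exact (summable_nat_add_iff 1).mpr hQsum
  have hRshift : Summable (fun k => Rfun a c y w u d q (k + 1)) := by
    have : (fun k => Rfun a c y w u d q (k + 1)) = fun k =>
        1 / (1 - a / c) * Sfun a c y w u d q (k + 1)
          - a / c / (1 - a / c) * (q ^ (k + 1) * Sfun a c y w u d q (k + 1))
          + (a / c / (1 - a / c) * (q ^ k * Sfun a c y w u d q k)
            - a / (c * d) / (1 - a / c) * Sfun a c y w u d q k) :=
      funext fun k => key2 a c y w u d q k hc hd hywu hac hden
    rw [this]
    exact ((hS1.mul_left _).sub (hQ1.mul_left _)).add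
      ((hQsum.mul_left _).sub (hSsum.mul_left _))
  have hRsum : Summable (Rfun a c y w u d q) := (summable_nat_add_iff 1).mp hRshift
  have hS0 : Sfun a c y w u d q 0 = 1 := by simp [Sfun, qPoch]
  have hR0 : Rfun a c y w u d q 0 = 1 := by
    simp [Rfun, qPoch, div_self hywu]
  have htsumS1 : ∑' k, Sfun a c y w u d q (k + 1) = (∑' k, Sfun a c y w u d q k) - 1 := by
    rw [Summable.tsum_eq_zero_add hSsum, hS0]; ring
  have htsumQ1 : ∑' k, (q : ℂ) ^ (k + 1) * Sfun a c y w u d q (k + 1)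
      = (∑' k, (q : ℂ) ^ k * Sfun a c y w u d q k) - 1 := by
    rw [Summable.tsum_eq_zero_add hQsum, hS0]; simp
  have hmain : ∑' k, Rfun a c y w u d q k
      = (1 - a / (c * d)) / (1 - a / c) * ∑' k, Sfun a c y w u d q k := by
    rw [Summable.tsum_eq_zero_add hRsum, hR0]
    have e1 : ∑' k, Rfun a c y w u d q (k + 1)
        = ∑' k, (1 / (1 - a / c) * Sfun a c y w u d q (k + 1)
          - a / c / (1 - a / c) * (q ^ (k + 1) * Sfun a c y w u d q (k + 1))
          + (a / c / (1 - a / c) * (q ^ k * Sfun a c y w u d q k)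
            - a / (c * d) / (1 - a / c) * Sfun a c y w u d q k)) :=
      tsum_congr fun k => key2 a c y w u d q k hc hd hywu hac hden
    rw [e1, Summable.tsum_add ((hS1.mul_left _).sub (hQ1.mul_left _))
        ((hQsum.mul_left _).sub (hSsum.mul_left _)),
      Summable.tsum_sub (hS1.mul_left _) (hQ1.mul_left _),
      Summable.tsum_sub (hQsum.mul_left _) (hSsum.mul_left _),
      tsum_mul_left, tsum_mul_left, tsum_mul_left, tsum_mul_left,
      htsumS1, htsumQ1]
    field_simp
    ring
  rw [hmain]
  have hone : (1 - a / c) / (1 - a / (c * d)) * ((1 - a / (c * d)) / (1 - a / c)) = 1 := by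
    field_simp
  rw [← mul_assoc, hone, one_mul]
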